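/- For an admissible RHD state, (E² - |m|² - D² - p²) = (Γp²/c_s²)γ²(2/(Γ-1) - Γc_s²/(Γ-1)²), where c_s² = Γp/(ρh), and this quantity is strictly positive when 0 < c_s² < Γ-1, Γ ∈ (1,2]. -/

import Mathlib

set_option maxHeartbeats 1000000


/-- For an admissible RHD state,
`E² - |m|² - D² - p² = (Γp²/c_s²)γ²(2/(Γ-1) - Γc_s²/(Γ-1)²)`, and this quantity
is strictly positive when `0 < c_s² < Γ-1`, `Γ ∈ (1,2]`. -/
theorem minkowski_identity (Γ ρ u1 u2 p γ h cs D m1 m2 E : ℝ)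
    (hΓ1 : 1 < Γ) (hΓ2 : Γ ≤ 2) (hρ : 0 < ρ) (hp : 0 < p)
    (hu : u1 ^ 2 + u2 ^ 2 < 1)
    (hγ : γ = 1 / Real.sqrt (1 - (u1 ^ 2 + u2 ^ 2)))
    (hh : h = 1 + p / ((Γ - 1) * ρ) + p / ρ)
    (hcs : cs = Real.sqrt (Γ * p / (ρ * h)))
    (hD : D = ρ * γ) (hm1 : m1 = ρ * h * γ ^ 2 * u1) (hm2 : m2 = ρ * h * γ ^ 2 * u2)
    (hE : E = ρ * h * γ ^ 2 - p)
    (hcs0 : 0 < cs ^ 2) (hcsΓ : cs ^ 2 < Γ - 1) :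
    E ^ 2 - (m1 ^ 2 + m2 ^ 2) - D ^ 2 - p ^ 2 =
        Γ * p ^ 2 / cs ^ 2 * γ ^ 2 *
          (2 / (Γ - 1) - Γ * cs ^ 2 / (Γ - 1) ^ 2) ∧
      E ^ 2 - (m1 ^ 2 + m2 ^ 2) - D ^ 2 - p ^ 2 > 0 := by
  have hΓ0 : (0:ℝ) < Γ - 1 := by linarith
  have h2 : Γ - 1 ≠ 0 := ne_of_gt hΓ0
  have hs : (0:ℝ) < 1 - (u1 ^ 2 + u2 ^ 2) := by linarith
  have hγ2 : γ ^ 2 * (1 - (u1 ^ 2 + u2 ^ 2)) = 1 := by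
    rw [hγ, div_pow, one_pow, Real.sq_sqrt hs.le]
    field_simp
  have hh0 : 0 < h := by
    rw [hh]
    have h1 : 0 < p / ((Γ - 1) * ρ) := div_pos hp (by positivity)
    have h2' : 0 < p / ρ := div_pos hp hρ
    linarith
  have hX : ρ * h ≠ 0 := by positivity
  have hcs2 : cs ^ 2 = Γ * p / (ρ * h) := by
    rw [hcs, Real.sq_sqrt (by positivity)]
  have hρh : (Γ - 1) * (ρ * h) = (Γ - 1) * ρ + Γ * p := by
    rw [hh]; field_simp; ring
  have step1 : E ^ 2 - (m1 ^ 2 + m2 ^ 2) - D ^ 2 - p ^ 2 =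
      γ ^ 2 * ((ρ * h) ^ 2 - 2 * p * (ρ * h) - ρ ^ 2) := by
    subst hD hm1 hm2 hE
    linear_combination ρ ^ 2 * h ^ 2 * γ ^ 2 * hγ2
  have eA : Γ * p ^ 2 / cs ^ 2 = p * (ρ * h) := by
    rw [hcs2]; field_simp
  have eB : Γ * cs ^ 2 / (Γ - 1) ^ 2 = (Γ ^ 2 * p / (ρ * h)) / (Γ - 1) ^ 2 := by
    rw [hcs2]; ring
  have step2 : γ ^ 2 * ((ρ * h) ^ 2 - 2 * p * (ρ * h) - ρ ^ 2) =
      p * (ρ * h) * γ ^ 2 * (2 / (Γ - 1) - (Γ ^ 2 * p / (ρ * h)) / (Γ - 1) ^ 2) := by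
    field_simp
    linear_combination (γ ^ 2 *
      ((Γ - 1) * (ρ * h) + (Γ - 1) * ρ - Γ * p)) * hρh
  have key : E ^ 2 - (m1 ^ 2 + m2 ^ 2) - D ^ 2 - p ^ 2 =
      Γ * p ^ 2 / cs ^ 2 * γ ^ 2 *
        (2 / (Γ - 1) - Γ * cs ^ 2 / (Γ - 1) ^ 2) := by
    rw [step1, step2, eA, eB]
  refine ⟨key, ?_⟩
  rw [key]
  have hγpos : 0 < γ ^ 2 := by nlinarith
  have h1 : 0 < Γ * p ^ 2 / cs ^ 2 := by positivity
  have hpos2 : 0 < 2 / (Γ - 1) - Γ * cs ^ 2 / (Γ - 1) ^ 2 := by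
    rw [sub_pos, div_lt_div_iff₀ (by positivity) hΓ0]
    have hlt : Γ * cs ^ 2 < 2 * (Γ - 1) := by
      nlinarith [mul_nonneg (by linarith : (0:ℝ) ≤ 2 - Γ) hcs0.le]
    calc Γ * cs ^ 2 * (Γ - 1) < 2 * (Γ - 1) * (Γ - 1) :=
          mul_lt_mul_of_pos_right hlt hΓ0
      _ = 2 * (Γ - 1) ^ 2 := by ring
  positivity
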